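/- For every binary tree T of size n and every k ≥ 0, the coefficient of x^k in the Tamari polynomial B_T(x) equals the number of binary trees T' with T' ≤ T in the Tamari order whose leftmost branch contains exactly k nodes. In particular, B_T(1) equals the number of binary trees T' with T' ≤ T. -/

import Mathlib

/-- Planar binary trees: empty, or a node with a left and a right subtree. -/
inductive BinTree : Type where
  | leaf : BinTree
  | node : BinTree → BinTree → BinTree
  deriving DecidableEq

namespace BinTree

/-- Size: number of internal nodes. -/
def size : BinTree → ℕ
  | leaf => 0
  | node l r => l.size + r.size + 1

/-- `sub T o a b` : in the binary-search-tree labelling of `T` shifted by `o`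
(its labels are `o+1, …, o+T.size`), the node labelled `a` lies in the subtree
rooted at the node labelled `b`, i.e. `a ⊴_T b`. -/
def sub : BinTree → ℕ → ℕ → ℕ → Prop
  | leaf, _, _, _ => False
  | node l r, o, a, b =>
      (b = o + l.size + 1 ∧ o + 1 ≤ a ∧ a ≤ o + l.size + r.size + 1) ∨
      l.sub o a b ∨ r.sub (o + l.size + 1) a b

/-- One right rotation, applied at any position of the tree. -/
inductive Rot : BinTree → BinTree → Prop
  | base (A B C : BinTree) : Rot (node (node A B) C) (node A (node B C))
  | left {l l' : BinTree} (r : BinTree) : Rot l l' → Rot (node l r) (node l' r)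
  | right (l : BinTree) {r r' : BinTree} : Rot r r' → Rot (node l r) (node l r')

end BinTree

/-- Tamari order: reflexive-transitive closure of right rotation. -/
def tamariLE : BinTree → BinTree → Prop := Relation.ReflTransGen BinTree.Rot

/-- `incRel T a c` : `a` is below `c` in the initial forest `inc T`. -/
def incRel (T : BinTree) (a c : ℕ) : Prop := a < c ∧ T.sub 0 a c

/-- `decRel T c a` : `c` is below `a` in the final forest `dec T`. -/
def decRel (T : BinTree) (c a : ℕ) : Prop := a < c ∧ T.sub 0 c a

/-- `Δ(g) = (x·g(x) − g(1)) / (x − 1)`, an exact polynomial division. -/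
noncomputable def polyDelta (g : Polynomial ℤ) : Polynomial ℤ :=
  Polynomial.divByMonic (Polynomial.X * g - Polynomial.C (g.eval 1))
    (Polynomial.X - Polynomial.C 1)

/-- The Tamari polynomial `B_T`, with `B_∅ = 1` and `B_T = x·B_L·Δ(B_R)`. -/
noncomputable def BT : BinTree → Polynomial ℤ
  | BinTree.leaf => 1
  | BinTree.node l r => Polynomial.X * BT l * polyDelta (BT r)

/-- Number of nodes on the leftmost branch. -/
def leftDepth : BinTree → ℕ
  | BinTree.leaf => 0
  | BinTree.node l _ => leftDepth l + 1

namespace BinTree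

open Polynomial Finset

/-! ### Auxiliary: insertion along the leftmost branch -/

/-- Insert a node with left subtree `L` at depth `i` along the leftmost branch of `R`. -/
def ins : BinTree → ℕ → BinTree → BinTree
  | S, 0, L => node L S
  | leaf, _+1, _ => leaf
  | node a b, i+1, L => node (ins a i L) b

@[simp] lemma ins_zero (S L : BinTree) : ins S 0 L = node L S := by cases S <;> rfl
@[simp] lemma ins_succ_node (a b : BinTree) (i : ℕ) (L : BinTree) :
    ins (node a b) (i+1) L = node (ins a i L) b := rfl

@[simp] lemma leftDepth_leaf : leftDepth leaf = 0 := rfl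
@[simp] lemma leftDepth_node (l r : BinTree) : leftDepth (node l r) = leftDepth l + 1 := rfl

lemma leftDepth_ins : ∀ (R : BinTree) (i : ℕ) (L : BinTree), i ≤ leftDepth R →
    leftDepth (ins R i L) = leftDepth L + 1 + i := by
  intro R
  induction R with
  | leaf =>
    intro i L h
    have hi : i = 0 := by simpa using h
    subst hi; simp
  | node a b ih =>
    intro i L h
    cases i with
    | zero => simp
    | succ j =>
      simp only [leftDepth_node, Nat.add_le_add_iff_right] at h
      simp [ih j L h]; omega

lemma size_ins : ∀ (R : BinTree) (i : ℕ) (L : BinTree), i ≤ leftDepth R →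
    size (ins R i L) = size R + size L + 1 := by
  intro R
  induction R with
  | leaf =>
    intro i L h
    have hi : i = 0 := by simpa using h
    subst hi; simp [size]
  | node a b ih =>
    intro i L h
    cases i with
    | zero => simp [size]; omega
    | succ j =>
      simp only [leftDepth_node, Nat.add_le_add_iff_right] at h
      simp [size, ih j L h]; omega

lemma rot_ins : ∀ (R : BinTree) (i : ℕ) (L : BinTree), i + 1 ≤ leftDepth R →
    Rot (ins R (i+1) L) (ins R i L) := by
  intro R
  induction R with
  | leaf => intro i L h; simp at h
  | node a b ih =>
    intro i L h
    cases i with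
    | zero =>
      rw [ins_succ_node, ins_zero, ins_zero]
      exact Rot.base L a b
    | succ j =>
      simp only [leftDepth_node, Nat.add_le_add_iff_right] at h
      rw [ins_succ_node, ins_succ_node]
      exact Rot.left b (ih j L h)

lemma tamari_node_left {l l' : BinTree} (r : BinTree) (h : tamariLE l l') :
    tamariLE (node l r) (node l' r) :=
  Relation.ReflTransGen.lift (fun x => node x r) (fun _ _ hr => Rot.left r hr) _ _ h

lemma tamari_node_right (l : BinTree) {r r' : BinTree} (h : tamariLE r r') :
    tamariLE (node l r) (node l r') :=
  Relation.ReflTransGen.lift (fun x => node l x) (fun _ _ hr => Rot.right l hr) _ _ h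

lemma tamari_ins_zero (R : BinTree) (i : ℕ) (L : BinTree) (h : i ≤ leftDepth R) :
    tamariLE (ins R i L) (node L R) := by
  induction i with
  | zero => rw [ins_zero]; exact Relation.ReflTransGen.refl
  | succ j ih =>
    exact Relation.ReflTransGen.head (rot_ins R j L h) (ih (Nat.le_of_succ_le h))

lemma tamari_ins {L R L' R' : BinTree} (i : ℕ) (hL : tamariLE L' L) (hR : tamariLE R' R)
    (h : i ≤ leftDepth R') : tamariLE (ins R' i L') (node L R) :=
  (tamari_ins_zero R' i L' h).trans ((tamari_node_left R' hL).trans (tamari_node_right L hR))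

lemma size_rot {a b : BinTree} (h : Rot a b) : size a = size b := by
  induction h with
  | base A B C => simp [size]; omega
  | left r _ ih => simp [size, ih]
  | right l _ ih => simp [size, ih]

lemma size_tamari {a b : BinTree} (h : tamariLE a b) : size a = size b := by
  induction h with
  | refl => rfl
  | tail _ hr ih => exact ih.trans (size_rot hr)

lemma ins_inj : ∀ (R : BinTree) (i : ℕ) (L R' : BinTree) (i' : ℕ) (L' : BinTree),
    i ≤ leftDepth R → i' ≤ leftDepth R' → size L = size L' →
    ins R i L = ins R' i' L' → i = i' ∧ R = R' ∧ L = L' := by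
  intro R i
  induction i generalizing R with
  | zero =>
    intro L R' i' L' _ hi' hs he
    cases i' with
    | zero => rw [ins_zero, ins_zero] at he; cases he; exact ⟨rfl, rfl, rfl⟩
    | succ j =>
      cases R' with
      | leaf => simp at hi'
      | node a b =>
        simp only [leftDepth_node, Nat.add_le_add_iff_right] at hi'
        rw [ins_zero, ins_succ_node] at he
        cases he
        have := size_ins a j L' hi'
        omega
  | succ j ih =>
    intro L R' i' L' hi hi' hs he
    cases R with
    | leaf => simp at hi
    | node a b =>
      simp only [leftDepth_node, Nat.add_le_add_iff_right] at hi
      cases i' with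
      | zero =>
        rw [ins_succ_node, ins_zero] at he
        cases he
        have := size_ins a j L hi
        omega
      | succ j' =>
        cases R' with
        | leaf => simp at hi'
        | node a' b' =>
          simp only [leftDepth_node, Nat.add_le_add_iff_right] at hi'
          rw [ins_succ_node, ins_succ_node] at he
          injection he with h1 h2
          obtain ⟨e1, e2, e3⟩ := ih a L a' j' L' hi hi' hs h1
          exact ⟨by omega, by rw [e2, h2], e3⟩

/-- Inversion for a rotation into a node. -/
lemma rot_inv {T₀ l r : BinTree} (h : Rot T₀ (node l r)) :
    (∃ B C, r = node B C ∧ T₀ = node (node l B) C) ∨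
    (∃ l', Rot l' l ∧ T₀ = node l' r) ∨
    (∃ r', Rot r' r ∧ T₀ = node l r') := by
  cases h with
  | base A B C => exact Or.inl ⟨B, C, rfl, rfl⟩
  | left _ h => exact Or.inr (Or.inl ⟨_, h, rfl⟩)
  | right _ h => exact Or.inr (Or.inr ⟨_, h, rfl⟩)

lemma not_rot_leaf {T₀ : BinTree} (h : Rot T₀ leaf) : False := by cases h

/-- Key inversion lemma: anything rotating to an inserted tree is again an inserted tree. -/
lemma rot_into_ins : ∀ (R : BinTree) (i : ℕ) (L T₀ : BinTree), i ≤ leftDepth R →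
    Rot T₀ (ins R i L) →
    ∃ R' i' L', i' ≤ leftDepth R' ∧ T₀ = ins R' i' L' ∧
      (R' = R ∨ Rot R' R) ∧ (L' = L ∨ Rot L' L) := by
  intro R
  induction R with
  | leaf =>
    intro i L T₀ hi hrot
    have h0 : i = 0 := by simpa using hi
    subst h0
    rw [ins_zero] at hrot
    rcases rot_inv hrot with ⟨B, C, hBC, _⟩ | ⟨l', hl, rfl⟩ | ⟨r', hr, _⟩
    · cases hBC
    · exact ⟨leaf, 0, l', by simp, by simp, Or.inl rfl, Or.inr hl⟩
    · exact absurd hr not_rot_leaf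
  | node a b iha ihb =>
    intro i L T₀ hi hrot
    cases i with
    | zero =>
      rw [ins_zero] at hrot
      rcases rot_inv hrot with ⟨B, C, hBC, rfl⟩ | ⟨l', hl, rfl⟩ | ⟨r', hr, rfl⟩
      · -- node a b = node B C, T₀ = node (node L B) C = ins (node a b) 1 L
        exact ⟨node B C, 1, L, by simp, by simp, Or.inl hBC.symm, Or.inl rfl⟩
      · exact ⟨node a b, 0, l', by simp, by simp, Or.inl rfl, Or.inr hl⟩
      · exact ⟨r', 0, L, by simp, by simp, Or.inr hr, Or.inl rfl⟩
    | succ j =>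
      simp only [leftDepth_node, Nat.add_le_add_iff_right] at hi
      rw [ins_succ_node] at hrot
      rcases rot_inv hrot with ⟨B, C, hBC, rfl⟩ | ⟨l', hl, rfl⟩ | ⟨r', hr, rfl⟩
      · -- b = node B C, T₀ = node (node (ins a j L) B) C
        subst hBC
        refine ⟨node (node a B) C, j + 2, L, by simp; omega, by simp,
          Or.inr (Rot.base a B C), Or.inl rfl⟩
      · obtain ⟨a', j', L', h1, rfl, h3, h4⟩ := iha j L l' hi hl
        refine ⟨node a' b, j' + 1, L', by simpa using h1, by simp, ?_, h4⟩
        rcases h3 with h3 | h3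
        · exact Or.inl (by rw [h3])
        · exact Or.inr (Rot.left b h3)
      · exact ⟨node a r', j + 1, L, by simpa using hi, by simp,
          Or.inr (Rot.right a hr), Or.inl rfl⟩

/-- Structure of the lower set of `node L R`. -/
lemma tamari_node_iff {L R T' : BinTree} :
    tamariLE T' (node L R) ↔
      ∃ R' i L', tamariLE L' L ∧ tamariLE R' R ∧ i ≤ leftDepth R' ∧ T' = ins R' i L' := by
  constructor
  · intro h
    induction h using Relation.ReflTransGen.head_induction_on with
    | refl =>
      exact ⟨R, 0, L, Relation.ReflTransGen.refl, Relation.ReflTransGen.refl,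
        Nat.zero_le _, (ins_zero R L).symm⟩
    | head hr _ ih =>
      obtain ⟨R', i, L', hL, hR, hi, he⟩ := ih
      subst he
      obtain ⟨R'', i'', L'', h1, h2, h3, h4⟩ := rot_into_ins R' i L' _ hi hr
      refine ⟨R'', i'', L'', ?_, ?_, h1, h2⟩
      · rcases h4 with h4 | h4
        · rwa [h4]
        · exact Relation.ReflTransGen.head h4 hL
      · rcases h3 with h3 | h3
        · rwa [h3]
        · exact Relation.ReflTransGen.head h3 hR
  · rintro ⟨R', i, L', hL, hR, hi, rfl⟩
    exact tamari_ins i hL hR hi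

lemma tamari_leaf {T' : BinTree} (h : tamariLE T' leaf) : T' = leaf := by
  rcases Relation.ReflTransGen.cases_tail h with h | ⟨c, _, hc⟩
  · exact h.symm
  · exact absurd hc not_rot_leaf

/-! ### Finsets of trees -/

/-- All binary trees of size `n`. -/
def treesOfSize : ℕ → Finset BinTree
  | 0 => {leaf}
  | n + 1 =>
    (Finset.range (n + 1)).attach.biUnion fun i =>
      ((treesOfSize i.1) ×ˢ (treesOfSize (n - i.1))).image fun p => node p.1 p.2
decreasing_by
  · have := Finset.mem_range.mp i.2; omega
  · have := Finset.mem_range.mp i.2; omega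

lemma mem_treesOfSize : ∀ (n : ℕ) (T : BinTree), T ∈ treesOfSize n ↔ T.size = n := by
  intro n
  induction n using Nat.strong_induction_on with
  | _ n ih =>
    intro T
    cases n with
    | zero =>
      cases T with
      | leaf => simp [treesOfSize, size]
      | node l r => simp [treesOfSize, size]
    | succ m =>
      cases T with
      | leaf =>
        simp only [treesOfSize, Finset.mem_biUnion, Finset.mem_attach, Finset.mem_image,
          Finset.mem_product, true_and, size]
        constructor
        · rintro ⟨i, ⟨p1, p2⟩, _, he⟩; cases he
        · omega
      | node l r =>
        simp only [treesOfSize, Finset.mem_biUnion, Finset.mem_attach, Finset.mem_image,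
          Finset.mem_product, true_and, size]
        constructor
        · rintro ⟨i, ⟨p1, p2⟩, ⟨hp1, hp2⟩, he⟩
          cases he
          have hi := Finset.mem_range.mp i.2
          dsimp only at hp1 hp2
          rw [ih i.1 (by omega) p1] at hp1
          rw [ih (m - i.1) (by omega) p2] at hp2
          dsimp only
          omega
        · intro h
          refine ⟨⟨l.size, Finset.mem_range.mpr (by omega)⟩, (l, r), ⟨?_, ?_⟩, rfl⟩
          · rw [ih l.size (by omega) l]
          · rw [ih (m - l.size) (by omega) r]; omega

open Classical in
noncomputable def downSet (T : BinTree) : Finset BinTree :=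
  (treesOfSize T.size).filter fun T' => tamariLE T' T

lemma mem_below {T T' : BinTree} : T' ∈ downSet T ↔ tamariLE T' T := by
  classical
  simp only [downSet, Finset.mem_filter, mem_treesOfSize]
  exact ⟨fun h => h.2, fun h => ⟨size_tamari h, h⟩⟩

/-! ### The polynomial identity -/

lemma polyDelta_eq (g q : Polynomial ℤ)
    (h : (X - C 1) * q = X * g - C (g.eval 1)) : polyDelta g = q := by
  rw [polyDelta, ← h, Polynomial.mul_divByMonic_cancel_left _ (monic_X_sub_C 1)]

lemma polyDelta_sum {α : Type*} (s : Finset α) (f : α → ℕ) :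
    polyDelta (∑ t ∈ s, (X : Polynomial ℤ) ^ f t) =
      ∑ t ∈ s, ∑ i ∈ Finset.range (f t + 1), (X : Polynomial ℤ) ^ i := by
  apply polyDelta_eq
  rw [Finset.mul_sum, Finset.mul_sum]
  have hev : (∑ t ∈ s, (X : Polynomial ℤ) ^ f t).eval 1 = (s.card : ℤ) := by
    rw [Polynomial.eval_finset_sum]; simp
  rw [hev]
  have hc : (Polynomial.C ((s.card : ℤ))) = ∑ _t ∈ s, (1 : Polynomial ℤ) := by
    rw [Finset.sum_const, nsmul_eq_mul, mul_one, map_natCast]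
  rw [hc, ← Finset.sum_sub_distrib]
  exact Finset.sum_congr rfl fun t _ => by
    rw [map_one, mul_comm, geom_sum_mul, pow_succ, mul_comm]

/-- The decomposition of `downSet (node L R)` as an image. -/
lemma below_node (L R : BinTree) :
    downSet (node L R) =
      ((downSet L) ×ˢ ((downSet R).sigma fun R' => Finset.range (leftDepth R' + 1))).image
        fun p => ins p.2.1 p.2.2 p.1 := by
  ext T'
  simp only [Finset.mem_image, Finset.mem_product, Finset.mem_sigma, Finset.mem_range,
    mem_below, tamari_node_iff]
  constructor
  · rintro ⟨R', i, L', hL, hR, hi, rfl⟩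
    exact ⟨⟨L', ⟨R', i⟩⟩, ⟨hL, hR, by dsimp only; omega⟩, rfl⟩
  · rintro ⟨⟨L', ⟨R', i⟩⟩, ⟨hL, hR, hi⟩, rfl⟩
    dsimp only at hi
    exact ⟨R', i, L', hL, hR, by omega, rfl⟩

lemma BT_eq (T : BinTree) : BT T = ∑ T' ∈ downSet T, (X : Polynomial ℤ) ^ leftDepth T' := by
  induction T with
  | leaf =>
    have hb : downSet leaf = {leaf} := by
      ext T'
      simp only [mem_below, Finset.mem_singleton]
      exact ⟨tamari_leaf, by rintro rfl; exact Relation.ReflTransGen.refl⟩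
    simp [BT, hb]
  | node L R ihL ihR =>
    have hinj : ∀ x ∈ ((downSet L) ×ˢ ((downSet R).sigma fun R' =>
          Finset.range (leftDepth R' + 1))),
        ∀ y ∈ ((downSet L) ×ˢ ((downSet R).sigma fun R' =>
          Finset.range (leftDepth R' + 1))),
        (fun p => ins p.2.1 p.2.2 p.1) x = (fun p => ins p.2.1 p.2.2 p.1) y → x = y := by
      rintro ⟨L1, ⟨R1, i1⟩⟩ h1 ⟨L2, ⟨R2, i2⟩⟩ h2 he
      simp only [Finset.mem_product, Finset.mem_sigma, Finset.mem_range, mem_below] at h1 h2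
      dsimp only at he
      have hs : size L1 = size L2 := by
        rw [size_tamari h1.1, size_tamari h2.1]
      obtain ⟨e1, e2, e3⟩ :=
        ins_inj R1 i1 L1 R2 i2 L2 (by omega) (by omega) hs he
      simp only [e1, e2, e3]
    rw [BT, ihL, ihR, polyDelta_sum, below_node, Finset.sum_image hinj,
      Finset.sum_product]
    simp only [Finset.sum_sigma]
    trans ∑ L' ∈ downSet L, (X * X ^ leftDepth L') *
        (∑ R' ∈ downSet R, ∑ i ∈ Finset.range (leftDepth R' + 1), (X : Polynomial ℤ) ^ i)
    · rw [← Finset.sum_mul, ← Finset.mul_sum]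
    refine Finset.sum_congr rfl fun L' _ => ?_
    rw [Finset.mul_sum]
    refine Finset.sum_congr rfl fun R' _ => ?_
    rw [Finset.mul_sum]
    refine Finset.sum_congr rfl fun i hi => ?_
    rw [leftDepth_ins R' i L' (by simp only [Finset.mem_range] at hi; omega)]
    ring

theorem main (T : BinTree) (k : ℕ) :
    (BT T).coeff k =
      (({T' : BinTree | tamariLE T' T ∧ leftDepth T' = k}).ncard : ℤ) ∧
    (BT T).eval 1 = (({T' : BinTree | tamariLE T' T}).ncard : ℤ) := by
  classical
  constructor
  · rw [BT_eq, Polynomial.finset_sum_coeff]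
    have h1 : {T' : BinTree | tamariLE T' T ∧ leftDepth T' = k} =
        (((downSet T).filter fun T' => leftDepth T' = k : Finset BinTree) : Set BinTree) := by
      ext T'; simp [mem_below]
    rw [h1, Set.ncard_coe_finset]
    simp only [Polynomial.coeff_X_pow]
    simp only [eq_comm (a := k)]
    rw [Finset.sum_boole]
  · rw [BT_eq]
    have h1 : {T' : BinTree | tamariLE T' T} = ((downSet T : Finset BinTree) : Set BinTree) := by
      ext T'; simp [mem_below]
    rw [h1, Set.ncard_coe_finset]
    rw [Polynomial.eval_finset_sum]
    simp

end BinTree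

/-- The coefficient of `x^k` in `B_T` counts the trees `T' ≤ T` whose leftmost
branch has exactly `k` nodes; `B_T(1)` counts all trees `T' ≤ T`. -/
theorem stmt11 (n : ℕ) (T : BinTree) (hT : T.size = n) (k : ℕ) :
    (BT T).coeff k =
      (({T' : BinTree | tamariLE T' T ∧ leftDepth T' = k}).ncard : ℤ) ∧
    (BT T).eval 1 = (({T' : BinTree | tamariLE T' T}).ncard : ℤ) :=
  BinTree.main T k
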